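/- Let p be a prime and Γ a transitive subgroup of the symmetric group S_p. Then Γ is solvable if and only if Γ contains a unique Sylow p-subgroup (which then has order p). -/

import Mathlib

open MulAction Subgroup

/-- A nontrivial element of a subgroup of a subgroup of `Equiv.Perm (Fin p)` acting
trivially on `Fin p` is the identity. -/
theorem aux_faithful {p : ℕ} {Γ : Subgroup (Equiv.Perm (Fin p))} {N : Subgroup ↥Γ} {n : ↥N}
    (h : ∀ b : Fin p, n • b = b) : n = 1 :=
  Subtype.ext (Subtype.ext (Equiv.ext fun b => h b))

/-- A nontrivial normal subgroup of a transitive subgroup of `S_p` is transitive. -/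
theorem aux_trans {p : ℕ} (hp : p.Prime) {Γ : Subgroup (Equiv.Perm (Fin p))}
    [MulAction.IsPretransitive ↥Γ (Fin p)]
    (N : Subgroup ↥Γ) [N.Normal] (hN : N ≠ ⊥) :
    MulAction.IsPretransitive ↥N (Fin p) := by
  have hdvd : ∀ a : Fin p, (orbit ↥N a).ncard = 1 ∨ (orbit ↥N a).ncard = p := by
    intro a
    have := (IsBlock.orbit_of_normal (G := ↥Γ) (N := N) a).ncard_dvd_card
      ⟨a, mem_orbit_self a⟩
    simp only [Nat.card_eq_fintype_card, Fintype.card_fin] at this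
    exact (Nat.Prime.eq_one_or_self_of_dvd hp _ this)
  by_cases hall : ∀ a : Fin p, (orbit ↥N a).ncard = 1
  · exfalso
    apply hN
    rw [eq_bot_iff]
    intro n hn
    have : (⟨n, hn⟩ : ↥N) = 1 := by
      apply aux_faithful
      intro b
      obtain ⟨c, hc⟩ := Set.ncard_eq_one.mp (hall b)
      have h1 : b ∈ orbit ↥N b := mem_orbit_self b
      have h2 : (⟨n, hn⟩ : ↥N) • b ∈ orbit ↥N b := mem_orbit b _
      rw [hc] at h1 h2
      rw [Set.mem_singleton_iff] at h1 h2
      rw [h1] at h2 ⊢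
      exact h2
    simpa using congrArg Subtype.val this
  · push_neg at hall
    obtain ⟨a, ha⟩ := hall
    have hcard : (orbit ↥N a).ncard = p := (hdvd a).resolve_left ha
    have huniv : orbit ↥N a = Set.univ := by
      apply Set.eq_of_subset_of_ncard_le (Set.subset_univ _)
      rw [hcard, Set.ncard_univ]
      simp [Nat.card_eq_fintype_card]
    constructor
    intro b c
    have hb : b ∈ orbit ↥N a := by rw [huniv]; trivial
    have hcm : c ∈ orbit ↥N a := by rw [huniv]; trivial
    obtain ⟨σ, hσ⟩ := hb
    obtain ⟨τ, hτ⟩ := hcm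
    refine ⟨τ * σ⁻¹, ?_⟩
    simp only at hσ hτ
    rw [mul_smul, ← hσ, inv_smul_smul, hτ]

/-- An abelian transitive subgroup of `S_p` has order `p` (it is regular). -/
theorem aux_card {p : ℕ} (hp : p.Prime) {Γ : Subgroup (Equiv.Perm (Fin p))}
    (N : Subgroup ↥Γ)
    [MulAction.IsPretransitive ↥N (Fin p)]
    (hcomm : ∀ x y : ↥N, x * y = y * x) : Nat.card ↥N = p := by
  have a : Fin p := ⟨0, hp.pos⟩
  have hbij : Function.Bijective (fun σ : ↥N => σ • a) := by
    constructor
    · intro σ τ h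
      simp only at h
      have key : ∀ b : Fin p, (τ⁻¹ * σ) • b = b := by
        intro b
        obtain ⟨g, hg⟩ := MulAction.exists_smul_eq ↥N a b
        rw [← hg, ← mul_smul, hcomm _ g, mul_smul]
        congr 1
        rw [mul_smul, h, inv_smul_smul]
      have h1 : τ⁻¹ * σ = 1 :=
        Subtype.ext (Subtype.ext (Equiv.ext fun b => key b))
      rwa [inv_mul_eq_one, eq_comm] at h1
    · intro b
      obtain ⟨g, hg⟩ := MulAction.exists_smul_eq ↥N a b
      exact ⟨g, hg⟩
  rw [Nat.card_eq_of_bijective _ hbij]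
  simp [Nat.card_eq_fintype_card]

/-- Automorphisms of a cyclic group commute. -/
theorem aux_mulAut_comm {G : Type*} [Group G] [IsCyclic G] (a b : MulAut G) :
    a * b = b * a := by
  obtain ⟨g, hg⟩ := IsCyclic.exists_generator (α := G)
  obtain ⟨m, hm⟩ := hg (a g)
  obtain ⟨n, hn⟩ := hg (b g)
  ext x
  obtain ⟨k, rfl⟩ := hg x
  simp only at hm hn
  simp only [MulAut.mul_apply, map_zpow, ← hm, ← hn, ← zpow_mul]
  ring_nf

/-- Galois: a transitive subgroup `Γ ⊆ S_p` is solvable iff it has a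
unique Sylow `p`-subgroup, which then has order `p`. -/
theorem stmt_1 (p : ℕ) (hp : p.Prime) (Γ : Subgroup (Equiv.Perm (Fin p)))
    (htrans : ∀ a b : Fin p, ∃ σ ∈ Γ, σ a = b) :
    IsSolvable ↥Γ ↔
      (Subsingleton (Sylow p ↥Γ) ∧
        ∀ Q : Sylow p ↥Γ, Nat.card ↥(Q : Subgroup ↥Γ) = p) := by
  haveI : Fact p.Prime := ⟨hp⟩
  haveI : MulAction.IsPretransitive ↥Γ (Fin p) :=
    ⟨fun a b => by obtain ⟨σ, hσ, h⟩ := htrans a b; exact ⟨⟨σ, hσ⟩, h⟩⟩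
  -- `Γ` is nontrivial
  haveI hΓnt : Nontrivial ↥Γ := by
    obtain ⟨σ, hσ, hσ1⟩ := htrans ⟨0, hp.pos⟩ ⟨1, hp.one_lt⟩
    refine ⟨⟨σ, hσ⟩, 1, fun h => ?_⟩
    have : σ = 1 := congrArg Subtype.val h
    rw [this] at hσ1
    simp only [Equiv.Perm.coe_one, id_eq, Fin.mk.injEq] at hσ1
    omega
  constructor
  · -- solvable → unique Sylow of order p
    intro hsol
    classical
    obtain ⟨n₀, hn₀, hmin⟩ :
        ∃ n₀, derivedSeries ↥Γ n₀ = ⊥ ∧ ∀ m < n₀, derivedSeries ↥Γ m ≠ ⊥ :=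
      ⟨Nat.find hsol.solvable, Nat.find_spec hsol.solvable,
        fun m hm => Nat.find_min hsol.solvable hm⟩
    have hn₀pos : n₀ ≠ 0 := by
      intro h
      rw [h, derivedSeries_zero] at hn₀
      exact top_ne_bot hn₀
    set A : Subgroup ↥Γ := derivedSeries ↥Γ (n₀ - 1) with hA
    haveI hAnormal : A.Normal := derivedSeries_normal _ _
    have hAne : A ≠ ⊥ := hmin _ (Nat.sub_lt (Nat.pos_of_ne_zero hn₀pos) one_pos)
    have hAcomm' : A ≤ centralizer (A : Set ↥Γ) := by
      rw [← commutator_eq_bot_iff_le_centralizer, ← derivedSeries_succ,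
        Nat.sub_add_cancel (Nat.one_le_iff_ne_zero.mpr hn₀pos)]
      exact hn₀
    have hAcomm : ∀ x y : ↥A, x * y = y * x := by
      intro x y
      have := mem_centralizer_iff.mp (hAcomm' x.2) y.1 y.2
      exact Subtype.ext this.symm
    haveI := aux_trans hp A hAne
    have hAcard : Nat.card ↥A = p := aux_card hp A hAcomm
    -- A is contained in a Sylow p-subgroup
    have hApgroup : IsPGroup p ↥A := IsPGroup.of_card (by rw [hAcard, pow_one])
    obtain ⟨Q, hAQ⟩ := hApgroup.exists_le_sylow
    -- Sylow subgroups of Γ have order dividing p!, so A = Q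
    obtain ⟨k, hk⟩ := IsPGroup.iff_card.mp Q.isPGroup'
    have hpk : (p : ℕ) ∣ p ^ k := by
      have hdv := card_dvd_of_le hAQ
      rwa [hAcard, hk] at hdv
    have hdvdfact : (p : ℕ) ^ k ∣ Nat.factorial p := by
      have h1 : Nat.card ↥(Q : Subgroup ↥Γ) ∣ Nat.card ↥Γ :=
        card_subgroup_dvd_card _
      have h2 : Nat.card ↥Γ ∣ Nat.card (Equiv.Perm (Fin p)) :=
        card_subgroup_dvd_card _
      have h3 : Nat.card (Equiv.Perm (Fin p)) = Nat.factorial p := by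
        simp [Nat.card_eq_fintype_card, Fintype.card_perm]
      rw [← h3]
      exact hk ▸ h1.trans h2
    have hk1 : k = 1 := by
      rcases Nat.lt_or_ge k 2 with h | h
      · interval_cases k
        · rw [pow_zero, Nat.dvd_one] at hpk
          exact absurd hpk hp.one_lt.ne'
        · rfl
      · exfalso
        have hp2 : p ^ 2 ∣ Nat.factorial p := dvd_trans (pow_dvd_pow p h) hdvdfact
        have : Nat.factorial p = p * Nat.factorial (p - 1) := by
          obtain ⟨q, hq⟩ : ∃ q, p = q + 1 := ⟨p - 1, (Nat.succ_pred_eq_of_pos hp.pos).symm⟩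
          subst hq
          simp [Nat.factorial_succ]
        rw [this, pow_two] at hp2
        have := (mul_dvd_mul_iff_left (by exact_mod_cast hp.pos.ne' : (p : ℕ) ≠ 0)).mp hp2
        have hple := (Nat.Prime.dvd_factorial hp).mp this
        have h2 := hp.two_le
        omega
    have hQcard : Nat.card ↥(Q : Subgroup ↥Γ) = p := by rw [hk, hk1, pow_one]
    have hAQeq : A = (Q : Subgroup ↥Γ) :=
      eq_of_le_of_card_ge hAQ (by rw [hQcard, hAcard])
    have hQnormal : (Q : Subgroup ↥Γ).Normal := hAQeq ▸ hAnormal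
    haveI : Unique (Sylow p ↥Γ) := Sylow.unique_of_normal Q hQnormal
    refine ⟨inferInstance, fun Q' => ?_⟩
    rw [Subsingleton.elim Q' Q, hQcard]
  · -- unique Sylow of order p → solvable
    rintro ⟨hsub, hcard⟩
    haveI := hsub
    obtain P : Sylow p ↥Γ := default
    set N : Subgroup ↥Γ := (P : Subgroup ↥Γ) with hN
    have hNcard : Nat.card ↥N = p := hcard P
    haveI hNnormal : N.Normal := by
      rw [← normalizer_eq_top_iff, eq_top_iff']
      intro g
      refine (Sylow.smul_eq_iff_mem_normalizer (P := P) (g := g)).mp ?_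
      exact Subsingleton.elim _ _
    haveI : IsCyclic ↥N := isCyclic_of_prime_card hNcard
    have hNcomm : ∀ x y : ↥N, x * y = y * x := by
      letI := IsCyclic.commGroup (α := ↥N)
      exact fun x y => mul_comm x y
    have hNne : N ≠ ⊥ := by
      intro h
      rw [h, card_bot] at hNcard
      exact hp.one_lt.ne hNcard
    haveI := aux_trans hp N hNne
    -- The centralizer of N in Γ is N itself
    have hNle : N ≤ centralizer (N : Set ↥Γ) := by
      intro x hx
      rw [mem_centralizer_iff]
      intro y hy
      exact congrArg Subtype.val (hNcomm ⟨y, hy⟩ ⟨x, hx⟩)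
    have hcent : centralizer (N : Set ↥Γ) ≤ N := by
      intro c hc
      set a : Fin p := ⟨0, hp.pos⟩ with ha
      obtain ⟨σ, hσ⟩ := MulAction.exists_smul_eq ↥N a (c • a)
      have hdc : (σ : ↥Γ)⁻¹ * c ∈ centralizer (N : Set ↥Γ) :=
        mul_mem (inv_mem (hNle σ.2)) hc
      have hfix : ∀ b : Fin p, ((σ : ↥Γ)⁻¹ * c) • b = b := by
        intro b
        obtain ⟨τ, hτ⟩ := MulAction.exists_smul_eq ↥N a b
        have hcommτ := mem_centralizer_iff.mp hdc τ.1 τ.2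
        have hτ' : (τ : ↥Γ) • a = b := hτ
        rw [← hτ', ← mul_smul, ← hcommτ, mul_smul]
        congr 1
        have hσ' : (σ : ↥Γ) • a = c • a := hσ
        rw [mul_smul, ← hσ', inv_smul_smul]
      have : (σ : ↥Γ)⁻¹ * c = 1 := Subtype.ext (Equiv.ext fun b => hfix b)
      have : c = (σ : ↥Γ) := by
        rw [inv_mul_eq_one] at this
        exact this.symm
      rw [this]
      exact σ.2
    -- Conjugation gives a hom to the automorphism group of N with kernel ≤ N
    haveI : IsSolvable ↥N := by
      letI := IsCyclic.commGroup (α := ↥N)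
      exact isSolvable_of_comm fun a b => mul_comm a b
    haveI : IsSolvable (MulAut ↥N) := isSolvable_of_comm aux_mulAut_comm
    apply solvable_of_ker_le_range N.subtype (MulAut.conjNormal (H := N)) (hG'' := this)
    intro x hx
    rw [Subgroup.range_subtype]
    apply hcent
    rw [mem_centralizer_iff]
    intro h hh
    have := MonoidHom.mem_ker.mp hx
    have happ : MulAut.conjNormal x (⟨h, hh⟩ : ↥N) = ⟨h, hh⟩ := by rw [this]; rfl
    have : x * h * x⁻¹ = h := congrArg Subtype.val happ
    calc h * x = x * h * x⁻¹ * x := by rw [this]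
    _ = x * h := by group
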